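/- Let A be a C*-algebra, τ ≥ 0, and a, b ∈ A₊ with 0 ≤ b ≤ a + τ·1 in the multiplier algebra (equivalently, in the unitization) of A. Then for every ε > τ there exists a contraction f ∈ A such that (b − ε)₊ = f* a f. -/

import Mathlib

open scoped NNReal ENNReal

open scoped NNReal ENNReal

lemma rordam_aux1 {τ ε : ℝ} (hτε : τ ≤ ε) (t : ℝ) :
    (ε - τ) * max (t - ε) 0 ≤ max (t - ε) 0 * (t - τ) := by
  rcases le_or_gt t ε with h | h
  · simp [max_eq_right (sub_nonpos.mpr h)]
  · rw [max_eq_left (by linarith), mul_comm]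
    exact mul_le_mul_of_nonneg_left (by linarith) (by linarith)

lemma rordam_aux2 {τ ε : ℝ} (hτε : τ ≤ ε) (t : ℝ) :
    max (t - ε) 0 * max (t - ε) 0 ≤ max (t - ε) 0 * (t - τ) := by
  rcases le_or_gt t ε with h | h
  · simp [max_eq_right (sub_nonpos.mpr h)]
  · rw [max_eq_left (by linarith)]
    exact mul_le_mul_of_nonneg_left (by linarith) (by linarith)

lemma rordam_aux3' {s t u : ℝ} (hs : 0 < s) (ht : 0 < t) (hst : s ≤ t) (hu : 0 ≤ u) :
    ((Real.sqrt (u + s))⁻¹ - (Real.sqrt (u + t))⁻¹) * u ≤ Real.sqrt t := by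
  set p := Real.sqrt (u + s) with hp_def
  set q := Real.sqrt (u + t) with hq_def
  have hp : 0 < p := Real.sqrt_pos.mpr (by linarith)
  have hq : 0 < q := Real.sqrt_pos.mpr (by linarith)
  have hpq : p ≤ q := Real.sqrt_le_sqrt (by linarith)
  have hp2 : p * p = u + s := Real.mul_self_sqrt (by linarith)
  have hq2 : q * q = u + t := Real.mul_self_sqrt (by linarith)
  have hup : Real.sqrt u ≤ p := Real.sqrt_le_sqrt (by linarith)
  have huu : Real.sqrt u * Real.sqrt u = u := Real.mul_self_sqrt hu
  have htt : Real.sqrt t * Real.sqrt t = t := Real.mul_self_sqrt ht.le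
  have hqp_t : (q - p) * (q + p) ≤ t := by nlinarith
  -- key : u * Real.sqrt t ≤ p * (u + t)
  have key : u * Real.sqrt t ≤ p * (u + t) := by
    have h1 : u * Real.sqrt t ≤ Real.sqrt u * (u + t) := by
      rcases le_total u t with h | h
      · have h' : Real.sqrt u ≤ Real.sqrt t := Real.sqrt_le_sqrt h
        calc u * Real.sqrt t = (Real.sqrt u * Real.sqrt u) * Real.sqrt t := by rw [huu]
          _ ≤ (Real.sqrt u * Real.sqrt t) * Real.sqrt t :=
              mul_le_mul_of_nonneg_right
                (mul_le_mul_of_nonneg_left h' (Real.sqrt_nonneg u)) (Real.sqrt_nonneg t)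
          _ = Real.sqrt u * t := by rw [mul_assoc, htt]
          _ ≤ Real.sqrt u * (u + t) :=
              mul_le_mul_of_nonneg_left (by linarith) (Real.sqrt_nonneg u)
      · have h' : Real.sqrt t ≤ Real.sqrt u := Real.sqrt_le_sqrt h
        calc u * Real.sqrt t ≤ u * Real.sqrt u := mul_le_mul_of_nonneg_left h' hu
          _ = Real.sqrt u * u := mul_comm _ _
          _ ≤ Real.sqrt u * (u + t) :=
              mul_le_mul_of_nonneg_left (by linarith) (Real.sqrt_nonneg u)
    exact h1.trans (mul_le_mul_of_nonneg_right hup (by linarith))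
  have hinv : (p⁻¹ - q⁻¹) = (q - p) / (p * q) := by
    field_simp
  rw [hinv]
  rw [div_mul_eq_mul_div, div_le_iff₀ (by positivity)]
  -- (q - p) * u ≤ √t * (p * q)
  have h2 : (q - p) * u * (q + p) ≤ Real.sqrt t * (p * q) * (q + p) := by
    have lhs_le : (q - p) * u * (q + p) ≤ t * u := by
      calc (q - p) * u * (q + p) = ((q - p) * (q + p)) * u := by ring
        _ ≤ t * u := mul_le_mul_of_nonneg_right hqp_t hu
    have rhs_ge : t * u ≤ Real.sqrt t * (p * q) * (q + p) := by
      have e1 : t * u = (u * Real.sqrt t) * Real.sqrt t := by rw [mul_assoc, htt]; ring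
      have e2 : u * Real.sqrt t * Real.sqrt t ≤ (p * (u + t)) * Real.sqrt t :=
        mul_le_mul_of_nonneg_right key (Real.sqrt_nonneg t)
      have e3 : p * (u + t) * Real.sqrt t ≤ Real.sqrt t * (p * q) * (q + p) := by
        rw [← hq2]
        nlinarith [mul_nonneg (Real.sqrt_nonneg t)
          (mul_nonneg (mul_nonneg hp.le hq.le) hp.le)]
      calc t * u = u * Real.sqrt t * Real.sqrt t := e1
        _ ≤ p * (u + t) * Real.sqrt t := e2
        _ ≤ Real.sqrt t * (p * q) * (q + p) := e3
    linarith
  have hqp_pos : 0 < q + p := by linarith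
  exact le_of_mul_le_mul_right h2 hqp_pos

lemma rordam_aux3 {s t u : ℝ} (hs : 0 < s) (ht : 0 < t) (hu : 0 ≤ u) :
    (((Real.sqrt (u + s))⁻¹ - (Real.sqrt (u + t))⁻¹) * u) ^ 2 ≤ max s t := by
  rcases le_total s t with h | h
  · have h1 := rordam_aux3' hs ht h hu
    have h0 : 0 ≤ ((Real.sqrt (u + s))⁻¹ - (Real.sqrt (u + t))⁻¹) * u := by
      apply mul_nonneg _ hu
      rw [sub_nonneg]
      apply inv_anti₀ (Real.sqrt_pos.mpr (by linarith))
      exact Real.sqrt_le_sqrt (by linarith)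
    rw [max_eq_right h]
    calc (((Real.sqrt (u + s))⁻¹ - (Real.sqrt (u + t))⁻¹) * u) ^ 2
        ≤ Real.sqrt t ^ 2 := by
          apply pow_le_pow_left₀ h0 h1
      _ = t := Real.sq_sqrt ht.le
  · have h1 := rordam_aux3' ht hs h hu
    have h0 : 0 ≤ ((Real.sqrt (u + t))⁻¹ - (Real.sqrt (u + s))⁻¹) * u := by
      apply mul_nonneg _ hu
      rw [sub_nonneg]
      apply inv_anti₀ (Real.sqrt_pos.mpr (by linarith))
      exact Real.sqrt_le_sqrt (by linarith)
    rw [max_eq_left h]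
    have : (((Real.sqrt (u + s))⁻¹ - (Real.sqrt (u + t))⁻¹) * u) ^ 2
        = (((Real.sqrt (u + t))⁻¹ - (Real.sqrt (u + s))⁻¹) * u) ^ 2 := by ring
    rw [this]
    calc (((Real.sqrt (u + t))⁻¹ - (Real.sqrt (u + s))⁻¹) * u) ^ 2
        ≤ Real.sqrt s ^ 2 := by
          apply pow_le_pow_left₀ h0 h1
      _ = s := Real.sq_sqrt hs.le

lemma rordam_radius_mul_comm {A : Type*} [CStarAlgebra A] (p q : A) :
    spectralRadius ℂ (p * q) = spectralRadius ℂ (q * p) := by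
  have key : ∀ x y : A, spectralRadius ℂ (x * y) ≤ spectralRadius ℂ (y * x) := by
    intro x y
    unfold spectralRadius
    refine iSup₂_le fun k hk => ?_
    rcases eq_or_ne k 0 with rfl | hk0
    · simp
    · have hk' : k ∈ spectrum ℂ (y * x) := by
        have h := spectrum.nonzero_mul_comm (𝕜 := ℂ) x y
        have hmem : k ∈ spectrum ℂ (x * y) \ {0} := ⟨hk, hk0⟩
        rw [h] at hmem
        exact hmem.1
      exact le_iSup₂ (f := fun k (_ : k ∈ spectrum ℂ (y * x)) => (‖k‖₊ : ℝ≥0∞)) k hk'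
  exact le_antisymm (key p q) (key q p)

lemma rordam_norm_conj {A : Type*} [CStarAlgebra A] (c z : A) (hc : IsSelfAdjoint c)
    (hz : IsSelfAdjoint z) : ‖c * (z * z) * c‖ = ‖z * (c * c) * z‖ := by
  have h1 : c * (z * z) * c = star (z * c) * (z * c) := by
    simp only [star_mul, hc.star_eq, hz.star_eq]; noncomm_ring
  have h2 : z * (c * c) * z = (z * c) * star (z * c) := by
    simp only [star_mul, hc.star_eq, hz.star_eq]; noncomm_ring
  rw [h1, h2, CStarRing.norm_star_mul_self, CStarRing.norm_self_mul_star]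

/-- If `0 ≤ b ≤ a + τ·1` and `ε > τ`, then there is a contraction `f` with
`(b - ε)₊ = f* a f`. -/
theorem stmt1 {A : Type*} [CStarAlgebra A] [PartialOrder A] [StarOrderedRing A]
    (τ : ℝ) (hτ : 0 ≤ τ) (a b : A) (ha : 0 ≤ a) (hb0 : 0 ≤ b)
    (hb : b ≤ a + (τ : ℂ) • (1 : A)) (ε : ℝ) (hε : τ < ε) :
    ∃ f : A, ‖f‖ ≤ 1 ∧ cfc (fun t : ℝ => max (t - ε) 0) b = star f * a * f := by
  obtain hA | hA := subsingleton_or_nontrivial A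
  · exact ⟨0, by simp, Subsingleton.elim _ _⟩
  set δ : ℝ := ε - τ with hδ_def
  have hδ : 0 < δ := by simp only [hδ_def]; linarith
  set g₀ : ℝ → ℝ := fun t => max (t - ε) 0 with hg₀_def
  have hg₀c : Continuous g₀ := by fun_prop
  have hg₀0 : ∀ t, 0 ≤ g₀ t := fun t => le_max_right _ _
  set sq : ℝ → ℝ := fun t => Real.sqrt (max (t - ε) 0) with hsq_def
  have hsqc : Continuous sq := by fun_prop
  have hsq2 : ∀ t, sq t * sq t = g₀ t := fun t => Real.mul_self_sqrt (le_max_right _ _)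
  set e : A := cfc g₀ b with he_def
  set c : A := cfc sq b with hc_def
  have hb_sa : IsSelfAdjoint b := .of_nonneg hb0
  have hc_sa : IsSelfAdjoint c := cfc_predicate sq b
  have he_sa : IsSelfAdjoint e := cfc_predicate g₀ b
  have he0 : 0 ≤ e := cfc_nonneg (fun x _ => le_max_right _ _)
  have hcc : c * c = e := by
    rw [hc_def, ← cfc_mul sq sq b hsqc.continuousOn hsqc.continuousOn]
    exact cfc_congr fun t _ => hsq2 t
  set d : A := c * a * c with hd_def
  have hd0 : 0 ≤ d := by
    have := star_left_conjugate_nonneg ha c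
    rwa [hc_sa.star_eq] at this
  have hd_sa : IsSelfAdjoint d := .of_nonneg hd0
  have hspec : ∀ u ∈ spectrum ℝ d, 0 ≤ u := fun u hu => spectrum_nonneg_of_nonneg hd0 hu
  -- the middle element m = cfc (g₀ t * (t - τ)) b and facts (i), (ii)
  have hmc : Continuous fun t => g₀ t * (t - τ) := by fun_prop
  set m : A := cfc (fun t => g₀ t * (t - τ)) b with hm_def
  have hble : b - τ • (1:A) ≤ a := by
    rw [sub_le_iff_le_add]
    calc b ≤ a + (τ:ℂ) • 1 := hb
    _ = a + τ • 1 := by rw [Complex.coe_smul]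
  have hmd : m ≤ d := by
    have h1 : c * (b - τ • (1:A)) * c ≤ c * a * c := by
      have := star_left_conjugate_le_conjugate hble c
      rwa [hc_sa.star_eq] at this
    have h2 : c * (b - τ • (1:A)) * c = m := by
      have expand : c * (b - τ • (1:A)) * c = c * b * c - τ • (c * c) := by
        simp only [mul_sub, sub_mul, mul_smul_comm, smul_mul_assoc, mul_one]
      have hcbc : c * b * c = cfc (fun t => sq t * t * sq t) b := by
        have h1 : cfc (fun x : ℝ => sq x * x) b = cfc sq b * b := by
          rw [cfc_mul sq (fun x => x) b hsqc.continuousOn (continuous_id.continuousOn),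
            cfc_id' ℝ b hb_sa]
        have h2 : cfc (fun x : ℝ => sq x * x * sq x) b
            = cfc (fun x : ℝ => sq x * x) b * cfc sq b :=
          cfc_mul _ _ b ((hsqc.mul continuous_id).continuousOn) hsqc.continuousOn
        rw [hc_def, h2, h1]
      rw [expand, hcbc, hcc, he_def, hm_def,
        ← cfc_smul τ g₀ b hg₀c.continuousOn,
        ← cfc_sub (fun t => sq t * t * sq t) (fun t => τ • g₀ t) b
          (by exact ((hsqc.mul continuous_id).mul hsqc).continuousOn)
          (by exact (hg₀c.const_smul τ).continuousOn)]
      apply cfc_congr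
      intro t _
      have h := hsq2 t
      simp only [smul_eq_mul]
      linear_combination t * h
    rwa [h2] at h1
  have hi : δ • e ≤ d := by
    refine le_trans ?_ hmd
    rw [he_def, hm_def, ← cfc_smul δ g₀ b hg₀c.continuousOn]
    refine cfc_mono ?_ ((hg₀c.const_smul δ).continuousOn) (hmc.continuousOn)
    intro t _
    simpa [smul_eq_mul] using rordam_aux1 hε.le t
  have hii : e * e ≤ d := by
    refine le_trans ?_ hmd
    rw [he_def, hm_def, ← cfc_mul g₀ g₀ b hg₀c.continuousOn hg₀c.continuousOn]
    refine cfc_mono ?_ ((hg₀c.mul hg₀c).continuousOn) (hmc.continuousOn)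
    intro t _
    exact rordam_aux2 hε.le t
  -- key norm bound pattern
  have key : ∀ (ξ : ℝ → ℝ), Continuous ξ → (∀ u, 0 ≤ ξ u) → ∀ M : ℝ, 0 ≤ M →
      (∀ u ∈ spectrum ℝ d, ξ u * u ≤ M) → ‖c * cfc ξ d * c‖ ≤ δ⁻¹ * M := by
    intro ξ hξc hξ0 M hM0 hM
    set R : A := cfc (fun u => Real.sqrt (ξ u)) d with hR_def
    have hRc : Continuous fun u => Real.sqrt (ξ u) := Real.continuous_sqrt.comp hξc
    have hR_sa : IsSelfAdjoint R := cfc_predicate _ d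
    have hRR : R * R = cfc ξ d := by
      rw [hR_def, ← cfc_mul _ _ d hRc.continuousOn hRc.continuousOn]
      exact cfc_congr fun u _ => Real.mul_self_sqrt (hξ0 u)
    have hflip : ‖c * cfc ξ d * c‖ = ‖R * (c * c) * R‖ := by
      rw [← hRR, rordam_norm_conj c R hc_sa hR_sa]
    have hRdR : R * d * R = cfc (fun u => Real.sqrt (ξ u) * u * Real.sqrt (ξ u)) d := by
      have h1 : cfc (fun x : ℝ => Real.sqrt (ξ x) * x) d = R * d := by
        rw [hR_def, cfc_mul _ (fun x => x) d hRc.continuousOn (continuous_id.continuousOn),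
          cfc_id' ℝ d hd_sa]
      have h2 : cfc (fun x : ℝ => Real.sqrt (ξ x) * x * Real.sqrt (ξ x)) d
          = cfc (fun x : ℝ => Real.sqrt (ξ x) * x) d * R := by
        rw [hR_def, cfc_mul (fun x : ℝ => Real.sqrt (ξ x) * x) _ d
          (by exact (hRc.mul continuous_id).continuousOn) hRc.continuousOn]
      rw [h2, h1]
    have hRdR' : R * d * R = cfc (fun u => ξ u * u) d := by
      rw [hRdR]
      exact cfc_congr fun u _ => by linear_combination u * Real.mul_self_sqrt (hξ0 u)
    have horder : δ • (R * (c * c) * R) ≤ cfc (fun u => ξ u * u) d := by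
      rw [← hRdR', hcc]
      have h1 := star_left_conjugate_le_conjugate hi R
      rw [hR_sa.star_eq] at h1
      calc δ • (R * e * R) = R * (δ • e) * R := by
            simp only [mul_smul_comm, smul_mul_assoc]
        _ ≤ R * d * R := h1
    have hbound : cfc (fun u => ξ u * u) d ≤ algebraMap ℝ A M := by
      rw [← cfc_const M d hd_sa]
      exact cfc_mono hM (by exact (hξc.mul continuous_id).continuousOn) continuousOn_const
    have h0 : 0 ≤ R * (c * c) * R := by
      rw [hcc]
      have := star_left_conjugate_nonneg he0 R
      rwa [hR_sa.star_eq] at this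
    have hnorm : ‖δ • (R * (c * c) * R)‖ ≤ M := by
      calc ‖δ • (R * (c * c) * R)‖ ≤ ‖algebraMap ℝ A M‖ :=
            CStarAlgebra.norm_le_norm_of_nonneg_of_le (smul_nonneg hδ.le h0)
              (horder.trans hbound)
        _ = ‖M‖ := norm_algebraMap' A M
        _ = M := Real.norm_of_nonneg hM0
    rw [norm_smul, Real.norm_of_nonneg hδ.le] at hnorm
    rw [hflip, inv_mul_eq_div, le_div_iff₀ hδ, mul_comm]
    exact hnorm
  -- sandwich computation
  have sandwich : ∀ ξ : ℝ → ℝ, Continuous ξ →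
      cfc ξ d * d * cfc ξ d = cfc (fun u => ξ u * u * ξ u) d := by
    intro ξ hξc
    have h1 : cfc (fun x : ℝ => ξ x * x) d = cfc ξ d * d := by
      rw [cfc_mul ξ (fun x => x) d hξc.continuousOn (continuous_id.continuousOn),
        cfc_id' ℝ d hd_sa]
    have h2 : cfc (fun x : ℝ => ξ x * x * ξ x) d = cfc (fun x : ℝ => ξ x * x) d * cfc ξ d :=
      cfc_mul _ _ d (by exact (hξc.mul continuous_id).continuousOn) hξc.continuousOn
    rw [h2, h1]
  -- the functions ψ s and the approximants F s
  set ψ : ℝ → ℝ → ℝ := fun s u => (Real.sqrt (max u 0 + s))⁻¹ with hψ_def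
  have hψc : ∀ s : ℝ, 0 < s → Continuous (ψ s) := by
    intro s hs
    exact Continuous.inv₀ (by fun_prop) (fun u => by positivity)
  have hψ0 : ∀ s u, 0 ≤ ψ s u := fun s u => inv_nonneg.mpr (Real.sqrt_nonneg _)
  have hψψ : ∀ s : ℝ, 0 < s → ∀ u : ℝ, 0 ≤ u → ψ s u * ψ s u = (u + s)⁻¹ := by
    intro s hs u hu
    simp only [hψ_def, max_eq_left hu, ← mul_inv]
    rw [Real.mul_self_sqrt (by positivity)]
  set F : ℝ → A := fun s => c * cfc (ψ s) d * c with hF_def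
  have hF_sa : ∀ s : ℝ, IsSelfAdjoint (F s) := by
    intro s
    have hW_sa : IsSelfAdjoint (cfc (ψ s) d) := cfc_predicate _ d
    simp only [hF_def, IsSelfAdjoint, star_mul, hc_sa.star_eq, hW_sa.star_eq, mul_assoc]
  -- Estimate A : error bound
  have herr : ∀ s : ℝ, 0 < s → ‖e - F s * a * F s‖ ≤ δ⁻¹ * s := by
    intro s hs
    have hWc := hψc s hs
    have hW_sa : IsSelfAdjoint (cfc (ψ s) d) := cfc_predicate _ d
    have hFaF : F s * a * F s = c * (cfc (ψ s) d * d * cfc (ψ s) d) * c := by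
      simp only [hF_def]
      rw [hd_def]
      simp only [mul_assoc]
    have herr_eq : e - F s * a * F s
        = c * ((1 : A) - cfc (fun u => ψ s u * u * ψ s u) d) * c := by
      rw [hFaF, sandwich (ψ s) hWc, ← hcc]
      noncomm_ring
    have h1Z : (1 : A) - cfc (fun u => ψ s u * u * ψ s u) d
        = cfc (fun u => 1 - ψ s u * u * ψ s u) d := by
      rw [cfc_sub (fun _ => (1:ℝ)) (fun u => ψ s u * u * ψ s u) d continuousOn_const
        (by exact ((hWc.mul continuous_id).mul hWc).continuousOn),
        cfc_const_one ℝ d hd_sa]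
    have hcongr : cfc (fun u => 1 - ψ s u * u * ψ s u) d
        = cfc (fun u => s * (ψ s u * ψ s u)) d := by
      apply cfc_congr
      intro u hu
      have hu0 := hspec u hu
      have h2 := hψψ s hs u hu0
      have hus : (0:ℝ) < u + s := by linarith
      have e1 : ψ s u * u * ψ s u = u * (u + s)⁻¹ := by
        rw [mul_comm (ψ s u) u, mul_assoc, h2]
      show 1 - ψ s u * u * ψ s u = s * (ψ s u * ψ s u)
      rw [e1, h2]
      field_simp
      ring
    rw [herr_eq, h1Z, hcongr]
    refine key _ ((continuous_const.mul (hWc.mul hWc))) (fun u => mul_nonneg hs.le (mul_self_nonneg _)) s hs.le ?_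
    intro u hu
    have hu0 := hspec u hu
    have hus : (0:ℝ) < u + s := by linarith
    show s * (ψ s u * ψ s u) * u ≤ s
    rw [hψψ s hs u hu0, mul_assoc, ← div_eq_inv_mul]
    calc s * (u / (u + s)) ≤ s * 1 := by
          refine mul_le_mul_of_nonneg_left ?_ hs.le
          rw [div_le_one hus]
          linarith
      _ = s := mul_one s
  -- Estimate B : contraction
  have hcontr : ∀ s : ℝ, 0 < s → ‖F s‖ ≤ 1 := by
    intro s hs
    have hWc := hψc s hs
    have hW_sa : IsSelfAdjoint (cfc (ψ s) d) := cfc_predicate _ d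
    set S : A := cfc (fun u => Real.sqrt (ψ s u)) d with hS_def
    have hSc : Continuous fun u => Real.sqrt (ψ s u) := Real.continuous_sqrt.comp hWc
    have hS_sa : IsSelfAdjoint S := cfc_predicate _ d
    have hSS : S * S = cfc (ψ s) d := by
      rw [hS_def, ← cfc_mul _ _ d hSc.continuousOn hSc.continuousOn]
      exact cfc_congr fun u _ => Real.mul_self_sqrt (hψ0 s u)
    have hFnorm : ‖F s‖ = ‖S * (c * c) * S‖ := by
      simp only [hF_def]
      rw [← hSS, rordam_norm_conj c S hc_sa hS_sa]
    have hEW : ‖e * cfc (ψ s) d‖ ≤ 1 := by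
      have h4 : cfc (ψ s) d * (e * e) * cfc (ψ s) d ≤ 1 := by
        have h5 := star_left_conjugate_le_conjugate hii (cfc (ψ s) d)
        rw [hW_sa.star_eq] at h5
        refine h5.trans ?_
        rw [sandwich (ψ s) hWc]
        apply cfc_le_one
        intro u hu
        have hu0 := hspec u hu
        have hus : (0:ℝ) < u + s := by linarith
        show ψ s u * u * ψ s u ≤ 1
        rw [mul_comm (ψ s u) u, mul_assoc, hψψ s hs u hu0, mul_comm u, ← div_eq_inv_mul,
          div_le_one hus]
        linarith
      have hee : (0:A) ≤ e * e := by
        have := star_mul_self_nonneg e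
        rwa [he_sa.star_eq] at this
      have h7 : 0 ≤ cfc (ψ s) d * (e * e) * cfc (ψ s) d := by
        have := star_left_conjugate_nonneg hee (cfc (ψ s) d)
        rwa [hW_sa.star_eq] at this
      have h8 : ‖cfc (ψ s) d * (e * e) * cfc (ψ s) d‖ ≤ 1 :=
        (CStarAlgebra.norm_le_one_iff_of_nonneg _ h7).mpr h4
      have h9 : star (e * cfc (ψ s) d) * (e * cfc (ψ s) d)
          = cfc (ψ s) d * (e * e) * cfc (ψ s) d := by
        simp only [star_mul, he_sa.star_eq, hW_sa.star_eq]
        noncomm_ring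
      have h10 : ‖e * cfc (ψ s) d‖ * ‖e * cfc (ψ s) d‖ ≤ 1 := by
        rw [← CStarRing.norm_star_mul_self, h9]
        exact h8
      nlinarith [norm_nonneg (e * cfc (ψ s) d)]
    have h_sa : IsSelfAdjoint (S * (c * c) * S) := by
      rw [hcc]
      simp only [IsSelfAdjoint, star_mul, hS_sa.star_eq, he_sa.star_eq, mul_assoc]
    have h1 : (‖S * (c * c) * S‖₊ : ℝ≥0∞) = spectralRadius ℂ (S * (c * c) * S) :=
      h_sa.spectralRadius_eq_nnnorm.symm
    have h2 : spectralRadius ℂ (S * (c * c) * S) = spectralRadius ℂ (c * c * (S * S)) := by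
      rw [mul_assoc, rordam_radius_mul_comm S (c * c * S), mul_assoc]
    have h3 : spectralRadius ℂ (c * c * (S * S)) ≤ (‖c * c * (S * S)‖₊ : ℝ≥0∞) :=
      spectrum.spectralRadius_le_nnnorm (𝕜 := ℂ) _
    have h11 : (‖S * (c * c) * S‖₊ : ℝ≥0∞) ≤ (‖c * c * (S * S)‖₊ : ℝ≥0∞) := by
      rw [h1, h2]; exact h3
    have h12 : ‖S * (c * c) * S‖ ≤ ‖c * c * (S * S)‖ := by exact_mod_cast h11
    rw [hFnorm]
    refine h12.trans ?_
    rw [hSS, hcc]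
    exact hEW
  -- Estimate C : Cauchy bound
  have hcauchy : ∀ s t : ℝ, 0 < s → 0 < t →
      ‖F s - F t‖ ^ 2 ≤ δ⁻¹ * (δ⁻¹ * max s t) := by
    intro s t hs ht
    have hhc : Continuous fun u => ψ s u - ψ t u := (hψc s hs).sub (hψc t ht)
    set H : A := cfc (fun u => ψ s u - ψ t u) d with hH_def
    have hH_sa : IsSelfAdjoint H := cfc_predicate _ d
    have hD : F s - F t = c * H * c := by
      simp only [hF_def]
      rw [hH_def, cfc_sub (ψ s) (ψ t) d (hψc s hs).continuousOn (hψc t ht).continuousOn]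
      noncomm_ring
    have hD_sa : IsSelfAdjoint (c * H * c) := by
      simp only [IsSelfAdjoint, star_mul, hc_sa.star_eq, hH_sa.star_eq, mul_assoc]
    have hsq_norm : ‖F s - F t‖ ^ 2 = ‖c * (H * e * H) * c‖ := by
      rw [hD, pow_two, ← CStarRing.norm_star_mul_self, hD_sa.star_eq]
      congr 1
      rw [← hcc]
      noncomm_ring
    have h0 : 0 ≤ c * (H * e * H) * c := by
      have h0' := star_left_conjugate_nonneg he0 (H * c)
      rw [star_mul, hH_sa.star_eq, hc_sa.star_eq] at h0'
      have : c * H * e * (H * c) = c * (H * e * H) * c := by noncomm_ring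
      rwa [this] at h0'
    set ξ : ℝ → ℝ := fun u => (ψ s u - ψ t u) ^ 2 * max u 0 with hξ_def
    have hξc : Continuous ξ := by
      apply (hhc.pow 2).mul
      fun_prop
    have horder : δ • (c * (H * e * H) * c) ≤ c * cfc ξ d * c := by
      have h1 := star_left_conjugate_le_conjugate hi H
      rw [hH_sa.star_eq] at h1
      have h2 := star_left_conjugate_le_conjugate h1 c
      rw [hc_sa.star_eq, sandwich _ hhc] at h2
      have hcongr : cfc (fun u => (ψ s u - ψ t u) * u * (ψ s u - ψ t u)) d = cfc ξ d := by
        apply cfc_congr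
        intro u hu
        have hu0 := hspec u hu
        show (ψ s u - ψ t u) * u * (ψ s u - ψ t u) = (ψ s u - ψ t u) ^ 2 * max u 0
        rw [max_eq_left hu0]
        ring
      rw [hcongr] at h2
      calc δ • (c * (H * e * H) * c) = c * (H * (δ • e) * H) * c := by
            simp only [mul_smul_comm, smul_mul_assoc]
        _ ≤ c * cfc ξ d * c := h2
    have hkey : ‖c * cfc ξ d * c‖ ≤ δ⁻¹ * max s t := by
      refine key ξ hξc (fun u => mul_nonneg (sq_nonneg _) (le_max_right _ _))
        (max s t) (le_max_of_le_left hs.le) ?_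
      intro u hu
      have hu0 := hspec u hu
      have h := rordam_aux3 (s := s) (t := t) (u := u) hs ht hu0
      show (ψ s u - ψ t u) ^ 2 * max u 0 * u ≤ max s t
      simp only [hψ_def, max_eq_left hu0]
      calc ((Real.sqrt (u + s))⁻¹ - (Real.sqrt (u + t))⁻¹) ^ 2 * u * u
          = (((Real.sqrt (u + s))⁻¹ - (Real.sqrt (u + t))⁻¹) * u) ^ 2 := by ring
        _ ≤ max s t := h
    have hnn : δ * ‖c * (H * e * H) * c‖ ≤ ‖c * cfc ξ d * c‖ := by
      have hmono := CStarAlgebra.norm_le_norm_of_nonneg_of_le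
        (smul_nonneg hδ.le h0) horder
      rwa [norm_smul, Real.norm_of_nonneg hδ.le] at hmono
    rw [hsq_norm]
    have : ‖c * (H * e * H) * c‖ ≤ δ⁻¹ * ‖c * cfc ξ d * c‖ := by
      rw [inv_mul_eq_div, le_div_iff₀ hδ, mul_comm]
      exact hnn
    refine this.trans ?_
    exact mul_le_mul_of_nonneg_left hkey (inv_nonneg.mpr hδ.le)
  -- assembly: take the limit along s = 1/(n+1)
  set sq₁ : ℕ → ℝ := fun n => 1 / (n + 1 : ℝ) with hsq₁_def
  have hsq₁pos : ∀ n, 0 < sq₁ n := fun n => by positivity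
  have hsq₁anti : ∀ N n, N ≤ n → sq₁ n ≤ sq₁ N := by
    intro N n h
    have hn : ((N:ℝ) + 1) ≤ ((n:ℝ) + 1) := by
      have := (Nat.cast_le (α := ℝ)).mpr h
      linarith
    exact one_div_le_one_div_of_le (by positivity) hn
  have hsq₁to : Filter.Tendsto sq₁ Filter.atTop (nhds 0) :=
    tendsto_one_div_add_atTop_nhds_zero_nat
  set G : ℕ → A := fun n => F (sq₁ n) with hG_def
  have hbound : ∀ N n m, N ≤ n → N ≤ m →
      dist (G n) (G m) ≤ δ⁻¹ * Real.sqrt (sq₁ N) := by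
    intro N n m hn hm
    rw [dist_eq_norm]
    have h1 := hcauchy (sq₁ n) (sq₁ m) (hsq₁pos n) (hsq₁pos m)
    have h2 : max (sq₁ n) (sq₁ m) ≤ sq₁ N := max_le (hsq₁anti N n hn) (hsq₁anti N m hm)
    have h3 : ‖G n - G m‖ ^ 2 ≤ δ⁻¹ ^ 2 * sq₁ N := by
      calc ‖G n - G m‖ ^ 2 ≤ δ⁻¹ * (δ⁻¹ * max (sq₁ n) (sq₁ m)) := h1
        _ ≤ δ⁻¹ * (δ⁻¹ * sq₁ N) := by
            have h4 := mul_le_mul_of_nonneg_left h2 (inv_nonneg.mpr hδ.le)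
            exact mul_le_mul_of_nonneg_left h4 (inv_nonneg.mpr hδ.le)
        _ = δ⁻¹ ^ 2 * sq₁ N := by ring
    have h4 : ‖G n - G m‖ = Real.sqrt (‖G n - G m‖ ^ 2) :=
      (Real.sqrt_sq (norm_nonneg _)).symm
    rw [h4]
    calc Real.sqrt (‖G n - G m‖ ^ 2) ≤ Real.sqrt (δ⁻¹ ^ 2 * sq₁ N) := Real.sqrt_le_sqrt h3
      _ = δ⁻¹ * Real.sqrt (sq₁ N) := by
          rw [Real.sqrt_mul (sq_nonneg _), Real.sqrt_sq (inv_nonneg.mpr hδ.le)]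
  have hcauchyG : CauchySeq G := by
    apply cauchySeq_of_le_tendsto_0 (fun N => δ⁻¹ * Real.sqrt (sq₁ N))
      (fun n m N hn hm => hbound N n m hn hm)
    have hs : Filter.Tendsto (fun N => Real.sqrt (sq₁ N)) Filter.atTop (nhds 0) := by
      have h5 := (Real.continuous_sqrt.tendsto 0).comp hsq₁to
      rwa [Function.comp_def, Real.sqrt_zero] at h5
    have h7 := hs.const_mul δ⁻¹
    rwa [mul_zero] at h7
  obtain ⟨f, hf⟩ := cauchySeq_tendsto_of_complete hcauchyG
  have hfnorm : ‖f‖ ≤ 1 :=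
    le_of_tendsto hf.norm (Filter.Eventually.of_forall fun n => hcontr _ (hsq₁pos n))
  have hfsa : star f = f := by
    have h1 : Filter.Tendsto (fun n => star (G n)) Filter.atTop (nhds (star f)) := hf.star
    have h2 : (fun n => star (G n)) = G := funext fun n => (hF_sa (sq₁ n)).star_eq
    rw [h2] at h1
    exact tendsto_nhds_unique h1 hf
  have hlim1 : Filter.Tendsto (fun n => G n * a * G n) Filter.atTop (nhds (f * a * f)) :=
    (hf.mul tendsto_const_nhds).mul hf
  have hlim2 : Filter.Tendsto (fun n => G n * a * G n) Filter.atTop (nhds e) := by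
    rw [tendsto_iff_dist_tendsto_zero]
    have hle : ∀ n, dist (G n * a * G n) e ≤ δ⁻¹ * sq₁ n := by
      intro n
      rw [dist_eq_norm, ← norm_neg, neg_sub]
      exact herr (sq₁ n) (hsq₁pos n)
    have h0 : Filter.Tendsto (fun n => δ⁻¹ * sq₁ n) Filter.atTop (nhds 0) := by
      have h6 := hsq₁to.const_mul δ⁻¹
      rwa [mul_zero] at h6
    exact squeeze_zero (fun n => dist_nonneg) hle h0
  have heq : e = f * a * f := tendsto_nhds_unique hlim2 hlim1
  refine ⟨f, hfnorm, ?_⟩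
  show e = star f * a * f
  rw [heq, hfsa]
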